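/- If a partially ordered vector space X contains at least one net catching element, then every order unit of X is net catching. -/

import Mathlib

/-- A net decreases to `x`: antitone with infimum `x`. -/
def DecrTo {ι X : Type*} [Preorder ι] [Preorder X] (f : ι → X) (x : X) : Prop :=
  Antitone f ∧ IsGLB (Set.range f) x

/-- `y` is a net catching element. -/
def NetCatchingElem {X : Type*} [Preorder X] [Zero X] (y : X) : Prop :=
  ∀ (ι : Type) [Preorder ι], Nonempty ι → Directed (· ≤ ·) (id : ι → ι) →
    ∀ f : ι → X, DecrTo f (0 : X) → ∃ α : ι, f α ≤ y

/-- `u ∈ X₊` is an order unit: every `x` satisfies `x ≤ n • u` for some `n`. -/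
def OrderUnit {X : Type*} [AddCommMonoid X] [PartialOrder X] (u : X) : Prop :=
  0 ≤ u ∧ ∀ x : X, ∃ n : ℕ, x ≤ n • u

/-- If a partially ordered vector space contains a net catching element, then
every order unit is net catching. -/
theorem stmt3 {X : Type*} [AddCommGroup X] [PartialOrder X] [IsOrderedAddMonoid X] [Module ℝ X] [PosSMulStrictMono ℝ X]
    (h : ∃ y : X, NetCatchingElem y) :
    ∀ u : X, OrderUnit u → NetCatchingElem u := by
  obtain ⟨y, hy⟩ := h
  intro u ⟨hu0, hu⟩ ι _ hne hdir f hf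
  obtain ⟨n, hn⟩ := hu y
  set c : ℝ := (n : ℝ) + 1 with hc
  have hcpos : (0 : ℝ) < c := by positivity
  -- the scaled net c • f also decreases to 0
  have hg : DecrTo (fun α => c • f α) (0 : X) := by
    constructor
    · intro a b hab
      exact smul_le_smul_of_nonneg_left (hf.1 hab) hcpos.le
    · have : Set.range (fun α => c • f α) = (OrderIso.smulRight hcpos : X ≃o X) '' Set.range f := by
        ext x
        simp [OrderIso.smulRight, Set.range_comp, Equiv.smulRight]
      rw [this]
      have := (OrderIso.isGLB_image' (f := (OrderIso.smulRight hcpos : X ≃o X))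
        (s := Set.range f) (x := (0 : X))).2 hf.2
      simpa [OrderIso.smulRight, Equiv.smulRight] using this
  obtain ⟨α, hα⟩ := hy ι hne hdir _ hg
  refine ⟨α, ?_⟩
  have hyc : y ≤ c • u := by
    have h1 : (n : ℝ) • u ≤ c • u := by
      apply smul_le_smul_of_nonneg_right _ hu0
      simp [hc]
    calc y ≤ (n : ℕ) • u := hn
      _ = (n : ℝ) • u := by rw [← Nat.cast_smul_eq_nsmul ℝ]
      _ ≤ c • u := h1
  have : c • f α ≤ c • u := hα.trans hyc
  exact le_of_smul_le_smul_left this hcpos
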